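/- Let I and O be disjoint finite sets of signals, let L_φ ⊆ (2^(I∪O))^ω, let p ∉ I∪O be a fresh output signal, and set O' = O ∪ {p}. Let L_φ↑ = {w ∈ (2^(I∪O'))^ω : w|_(I∪O) ∈ L_φ} (letterwise restriction) and L_ψ = {w ∈ (2^(I∪O'))^ω : p ∈ w₀}. Then L_φ is realizable by an (I/O)-transducer if and only if ⟨L_φ↑, L_ψ, {p}⟩ is realizable with privacy by an (I/O')-transducer. -/

import Mathlib

open Set

/-- Infinite words over alphabet `A`. -/
abbrev Word (A : Type) := ℕ → A

/-- `noiseW H w`: all words that agree with `w` on the visible signals `Hᶜ`. -/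
def noiseW {A : Type} (H : Set A) (w : Word (Set A)) : Set (Word (Set A)) :=
  {w' | ∀ j, w' j ∩ Hᶜ = w j ∩ Hᶜ}

/-- A transducer with input alphabet `Ain` and output alphabet `Aout`. -/
structure Transd (Ain Aout : Type) where
  S : Type
  fintype_S : Fintype S
  s0 : S
  η : S → Ain → S
  τ : S → Aout

def Transd.stateAt {Ain Aout : Type} (T : Transd Ain Aout) (w : Word Ain) : ℕ → T.S
  | 0 => T.η T.s0 (w 0)
  | n + 1 => T.η (T.stateAt w n) (w (n + 1))

def Transd.out {Ain Aout : Type} (T : Transd Ain Aout) (w : Word Ain) (j : ℕ) : Aout :=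
  T.τ (T.stateAt w j)

/-- The computation of an (I/O)-transducer on an input word. -/
def ioComp {I O : Type} (T : Transd (Set I) (Set O)) (wI : Word (Set I)) :
    Word (Set (I ⊕ O)) :=
  fun j => Sum.inl '' wI j ∪ Sum.inr '' T.out wI j

/-- `T` realizes the language `L`. -/
def Transd.realizes {I O : Type} (T : Transd (Set I) (Set O))
    (L : Set (Word (Set (I ⊕ O)))) : Prop :=
  ∀ wI, ioComp T wI ∈ L

/-- `T` `H`-hides the secret `Lψ`. -/
def Transd.hides {I O : Type} (T : Transd (Set I) (Set O)) (H : Set (I ⊕ O))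
    (Lψ : Set (Word (Set (I ⊕ O)))) : Prop :=
  ∀ wI, ∃ wp ∈ noiseW H (ioComp T wI), ∃ wm ∈ noiseW H (ioComp T wI), wp ∈ Lψ ∧ wm ∉ Lψ

/-- with `O' = O ∪ {p}` for a fresh signal `p`, the specification `Lφ` is
realizable iff `⟨Lφ↑, {w : p ∈ w₀}, {p}⟩` is realizable with privacy. -/

lemma hides_triv {I O : Type} (T' : Transd (Set I) (Set (O ⊕ Unit))) :
    T'.hides {Sum.inr (Sum.inr ())} {w | Sum.inr (Sum.inr ()) ∈ w 0} := by
  intro wI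
  refine ⟨fun j => insert (Sum.inr (Sum.inr ())) (ioComp T' wI j), ?_,
    fun j => ioComp T' wI j \ {Sum.inr (Sum.inr ())}, ?_, ?_, ?_⟩
  · intro j; ext x; simp only [Set.mem_inter_iff, Set.mem_insert_iff, Set.mem_compl_iff,
      Set.mem_singleton_iff]; tauto
  · intro j; ext x; simp only [Set.mem_inter_iff, Set.mem_diff, Set.mem_compl_iff,
      Set.mem_singleton_iff]; tauto
  · exact Set.mem_insert _ _
  · simp

theorem realizable_iff_privacy_with_fresh_signal {I O : Type} [Fintype I] [Fintype O]
    (Lφ : Set (Word (Set (I ⊕ O)))) :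
    (∃ T : Transd (Set I) (Set O), T.realizes Lφ) ↔
    (∃ T' : Transd (Set I) (Set (O ⊕ Unit)),
      T'.realizes
        {w | (fun j => (Sum.map id Sum.inl : I ⊕ O → I ⊕ (O ⊕ Unit)) ⁻¹' w j) ∈ Lφ} ∧
      T'.hides {Sum.inr (Sum.inr ())} {w | Sum.inr (Sum.inr ()) ∈ w 0}) := by
  constructor
  · rintro ⟨T, hT⟩
    set T' : Transd (Set I) (Set (O ⊕ Unit)) :=
      ⟨T.S, T.fintype_S, T.s0, T.η, fun s => Sum.inl '' T.τ s⟩ with hT'def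
    refine ⟨T', ?_, hides_triv T'⟩
    intro wI
    have hst : ∀ n, T'.stateAt wI n = T.stateAt wI n := by
      intro n; induction n with
      | zero => rfl
      | succ n ih => simp [Transd.stateAt, ih]; rfl
    have key : (fun j => (Sum.map id Sum.inl : I ⊕ O → I ⊕ (O ⊕ Unit)) ⁻¹' ioComp T' wI j)
        = ioComp T wI := by
      funext j; ext x
      cases x with
      | inl i => simp [ioComp, Transd.out, hst]
      | inr o => simp [ioComp, Transd.out, hst, hT'def]; exact ⟨fun ⟨a, ha, he⟩ => Sum.inl_injective he ▸ ha, fun h => ⟨o, h, rfl⟩⟩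
    show _ ∈ Lφ
    rw [key]; exact hT wI
  · rintro ⟨T', hreal, _⟩
    set T : Transd (Set I) (Set O) :=
      ⟨T'.S, T'.fintype_S, T'.s0, T'.η, fun s => Sum.inl ⁻¹' T'.τ s⟩ with hTdef
    refine ⟨T, fun wI => ?_⟩
    have hst : ∀ n, T.stateAt wI n = T'.stateAt wI n := by
      intro n; induction n with
      | zero => rfl
      | succ n ih => simp [Transd.stateAt, ih]; rfl
    have key : (fun j => (Sum.map id Sum.inl : I ⊕ O → I ⊕ (O ⊕ Unit)) ⁻¹' ioComp T' wI j)
        = ioComp T wI := by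
      funext j; ext x
      cases x with
      | inl i => simp [ioComp, Transd.out, hst]
      | inr o => simp [ioComp, Transd.out, hst, hTdef]; rfl
    rw [← key]; exact hreal wI
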